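/- The interpolation inequality for μ-strongly convex, L-smooth functions: if f is μ-strongly convex and L-smooth with 0 < μ < L, then for all x, y: f(x) ≥ f(y) + ⟪∇f(y), x - y⟫ + (1/(2L))‖∇f(x) - ∇f(y)‖² + (μL/(2(L-μ)))‖x - y - (1/L)(∇f(x) - ∇f(y))‖². -/

import Mathlib

open RealInnerProductSpace

lemma descent_lemma {d : ℕ} (f : EuclideanSpace ℝ (Fin d) → ℝ)
    (g : EuclideanSpace ℝ (Fin d) → EuclideanSpace ℝ (Fin d))
    (hg : ∀ x, HasGradientAt f (g x) x) (L : ℝ)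
    (hsmooth : ∀ x y, ‖g x - g y‖ ≤ L * ‖x - y‖) :
    ∀ a b, f b ≤ f a + ⟪g a, b - a⟫ + L / 2 * ‖b - a‖ ^ 2 := by
  intro a b
  set v := b - a with hv
  have hcurve : ∀ t : ℝ, HasDerivAt (fun s : ℝ => f (a + s • v)) ⟪g (a + t • v), v⟫ t := by
    intro t
    have h1 : HasDerivAt (fun s : ℝ => a + s • v) v t := by
      simpa using ((hasDerivAt_id t).smul_const v).const_add a
    have h2 := (hasGradientAt_iff_hasFDerivAt.mp (hg (a + t • v)))
    have := h2.comp_hasDerivAt t h1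
    simp only [Function.comp_def, InnerProductSpace.toDual_apply_apply] at this
    exact this
  set χ : ℝ → ℝ := fun t => f a + t * ⟪g a, v⟫ + L / 2 * ‖v‖ ^ 2 * t ^ 2 - f (a + t • v) with hχ
  have hχd : ∀ t : ℝ, HasDerivAt χ (⟪g a, v⟫ + L * ‖v‖ ^ 2 * t - ⟪g (a + t • v), v⟫) t := by
    intro t
    have h1 : HasDerivAt (fun t : ℝ => f a + t * ⟪g a, v⟫ + L / 2 * ‖v‖ ^ 2 * t ^ 2)
        (⟪g a, v⟫ + L * ‖v‖ ^ 2 * t) t := by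
      have ha : HasDerivAt (fun t : ℝ => t * ⟪g a, v⟫) ⟪g a, v⟫ t := by
        simpa using (hasDerivAt_id t).mul_const ⟪g a, v⟫
      have hb : HasDerivAt (fun t : ℝ => L / 2 * ‖v‖ ^ 2 * t ^ 2) (L / 2 * ‖v‖ ^ 2 * (2 * t)) t := by
        simpa using (hasDerivAt_pow 2 t).const_mul (L / 2 * ‖v‖ ^ 2)
      have := (ha.add hb).const_add (f a)
      exact (this.congr_deriv (by ring : ⟪g a, v⟫ + L / 2 * ‖v‖ ^ 2 * (2 * t) = ⟪g a, v⟫ + L * ‖v‖ ^ 2 * t)).congr_of_eventuallyEq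
        (Filter.Eventually.of_forall fun s => by simp only [Pi.add_apply]; ring)
    exact h1.sub (hcurve t)
  have hmono : MonotoneOn χ (Set.Icc 0 1) := by
    apply monotoneOn_of_deriv_nonneg (convex_Icc 0 1)
    · exact fun t _ => ((hχd t).continuousAt).continuousWithinAt
    · exact fun t _ => ((hχd t).differentiableAt).differentiableWithinAt
    · intro t ht
      rw [interior_Icc] at ht
      rw [(hχd t).deriv]
      have key : ⟪g (a + t • v) - g a, v⟫ ≤ L * ‖v‖ ^ 2 * t := by
        calc ⟪g (a + t • v) - g a, v⟫ ≤ ‖g (a + t • v) - g a‖ * ‖v‖ := real_inner_le_norm _ _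
        _ ≤ L * ‖a + t • v - a‖ * ‖v‖ := by
            have := hsmooth (a + t • v) a
            nlinarith [norm_nonneg v, norm_nonneg (g (a + t • v) - g a)]
        _ = L * ‖v‖ ^ 2 * t := by
            simp [norm_smul, abs_of_pos ht.1]
            ring
      have : ⟪g (a + t • v), v⟫ - ⟪g a, v⟫ ≤ L * ‖v‖ ^ 2 * t := by
        rw [← inner_sub_left]; exact key
      linarith
  have h01 := hmono (Set.mem_Icc.mpr ⟨le_refl 0, zero_le_one⟩)
    (Set.mem_Icc.mpr ⟨zero_le_one, le_refl 1⟩) zero_le_one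
  have h0 : χ 0 = 0 := by simp [hχ]
  have h1 : χ 1 = f a + ⟪g a, v⟫ + L / 2 * ‖v‖ ^ 2 - f b := by
    simp [hχ, hv]
  rw [h0, h1] at h01
  linarith

theorem pep_interpolation_inequality
    {d : ℕ} (f : EuclideanSpace ℝ (Fin d) → ℝ)
    (g : EuclideanSpace ℝ (Fin d) → EuclideanSpace ℝ (Fin d))
    (hg : ∀ x, HasGradientAt f (g x) x)
    (μ L : ℝ) (hμ : 0 < μ) (hμL : μ < L)
    (hsc : ∀ x y, f y ≥ f x + ⟪g x, y - x⟫ + μ / 2 * ‖y - x‖ ^ 2)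
    (hsmooth : ∀ x y, ‖g x - g y‖ ≤ L * ‖x - y‖) :
    ∀ x y, f x ≥ f y + ⟪g y, x - y⟫ + 1 / (2 * L) * ‖g x - g y‖ ^ 2 +
      μ * L / (2 * (L - μ)) * ‖x - y - L⁻¹ • (g x - g y)‖ ^ 2 := by
  intro x y
  have hL : (0:ℝ) < L := hμ.trans hμL
  set K : ℝ := L - μ with hKdef
  have hK : (0:ℝ) < K := by simp [hKdef]; linarith
  set w : EuclideanSpace ℝ (Fin d) := x - y with hw
  set gd : EuclideanSpace ℝ (Fin d) := g x - g y with hgd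
  set u : EuclideanSpace ℝ (Fin d) := gd - μ • w with hu
  set z : EuclideanSpace ℝ (Fin d) := x - K⁻¹ • u with hz
  set A : ℝ := ‖gd‖ ^ 2 with hA
  set B : ℝ := ⟪gd, w⟫ with hB
  set C : ℝ := ‖w‖ ^ 2 with hC
  have hzx : z - x = -(K⁻¹ • u) := by rw [hz]; abel
  have hzy : z - y = w - K⁻¹ • u := by rw [hz, hw]; abel
  have hwgd : ⟪w, gd⟫ = B := (real_inner_comm w gd).symm
  have hnu : ‖u‖ ^ 2 = A - 2 * μ * B + μ ^ 2 * C := by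
    rw [hu, norm_sub_sq_real, real_inner_smul_right, norm_smul]
    rw [mul_pow, Real.norm_eq_abs, sq_abs]
    rw [← hA, ← hB, ← hC]
    ring
  have hnKu : ‖K⁻¹ • u‖ ^ 2 = K⁻¹ ^ 2 * (A - 2 * μ * B + μ ^ 2 * C) := by
    rw [norm_smul, mul_pow, Real.norm_eq_abs, sq_abs, hnu]
  have h3 : ‖z - x‖ ^ 2 = K⁻¹ ^ 2 * (A - 2 * μ * B + μ ^ 2 * C) := by
    rw [hzx, norm_neg, hnKu]
  have h2 : ‖z - y‖ ^ 2 = C - 2 * K⁻¹ * (B - μ * C) + K⁻¹ ^ 2 * (A - 2 * μ * B + μ ^ 2 * C) := by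
    rw [hzy, norm_sub_sq_real, hnKu, real_inner_smul_right, hu, inner_sub_right,
      real_inner_smul_right, hwgd, real_inner_self_eq_norm_sq, ← hC]
    ring
  have h1 : ⟪g y, z - y⟫ - ⟪g x, z - x⟫ = ⟪g y, x - y⟫ + K⁻¹ * (A - μ * B) := by
    have e1 : z - y = (x - y) + (z - x) := by abel
    rw [e1, inner_add_right]
    have e2 : ⟪g y, z - x⟫ - ⟪g x, z - x⟫ = ⟪gd, K⁻¹ • u⟫ := by
      rw [← inner_sub_left, hzx, inner_neg_right, hgd, ← inner_neg_left]
      simp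
    have e3 : ⟪gd, K⁻¹ • u⟫ = K⁻¹ * (A - μ * B) := by
      rw [real_inner_smul_right, hu, inner_sub_right, real_inner_smul_right,
        real_inner_self_eq_norm_sq, ← hA, ← hB]
    linarith [e2, e3]
  have h4 : ‖x - y - L⁻¹ • gd‖ ^ 2 = C - 2 * L⁻¹ * B + L⁻¹ ^ 2 * A := by
    rw [← hw, norm_sub_sq_real, real_inner_smul_right, hwgd, norm_smul, mul_pow,
      Real.norm_eq_abs, sq_abs, ← hA, ← hC]
    ring
  have hI := hsc y z
  have hII := descent_lemma f g hg L hsmooth x z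
  rw [h2] at hI
  rw [h3] at hII
  have hKne : K ≠ 0 := ne_of_gt hK
  have hLne : L ≠ 0 := ne_of_gt hL
  have hid : K⁻¹ * (A - μ * B) + μ / 2 * (C - 2 * K⁻¹ * (B - μ * C) + K⁻¹ ^ 2 * (A - 2 * μ * B + μ ^ 2 * C))
      - L / 2 * (K⁻¹ ^ 2 * (A - 2 * μ * B + μ ^ 2 * C))
      = 1 / (2 * L) * A + μ * L / (2 * K) * (C - 2 * L⁻¹ * B + L⁻¹ ^ 2 * A) := by
    field_simp
    ring
  rw [h4]
  linarith [hI, hII, h1, hid]
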